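/- For an integrable random variable X, the left derivative of the convex function u ↦ E[(X-u)⁺] at u equals P(X < u) - 1. -/

import Mathlib

open MeasureTheory Set Filter Topology

/-- For an integrable random variable `X`, the left derivative of the convex function
`u ↦ E[(X-u)⁺]` at `u` equals `P(X < u) - 1`. -/
theorem left_derivative_expected_excess {Ω : Type*} [MeasurableSpace Ω]
    (μ : Measure Ω) [IsProbabilityMeasure μ]
    (X : Ω → ℝ) (hX : Integrable X μ) (u : ℝ) :
    Tendsto (fun u' => ((∫ ω, max (X ω - u') 0 ∂μ) - ∫ ω, max (X ω - u) 0 ∂μ) / (u' - u))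
      (𝓝[<] u) (𝓝 ((μ {ω | X ω < u}).toReal - 1)) := by
  obtain ⟨Y, hYmeas, hXY⟩ := hX.1
  have hYmeas' : Measurable Y := hYmeas.measurable
  have hYint : Integrable Y μ := hX.congr hXY
  have hIeq : ∀ v : ℝ, (∫ ω, max (X ω - v) 0 ∂μ) = ∫ ω, max (Y ω - v) 0 ∂μ := fun v =>
    integral_congr_ae (hXY.mono fun ω h => by simp only [h])
  have hμeq : μ {ω | X ω < u} = μ {ω | Y ω < u} := by
    apply measure_congr
    filter_upwards [hXY] with ω h
    change (X ω < u) = (Y ω < u)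
    rw [h]
  simp only [hIeq, hμeq]
  -- the a.e. limit function
  set g : Ω → ℝ := ({ω | u ≤ Y ω}).indicator (fun _ => (-1 : ℝ)) with hg
  have hset : MeasurableSet {ω | u ≤ Y ω} := measurableSet_le measurable_const hYmeas'
  have hgint : (∫ ω, g ω ∂μ) = (μ {ω | Y ω < u}).toReal - 1 := by
    rw [hg, integral_indicator_const _ hset, Measure.real]
    have hcompl : {ω | u ≤ Y ω} = {ω | Y ω < u}ᶜ := by
      ext ω; simp [not_lt]
    rw [hcompl, measure_compl (measurableSet_lt hYmeas' measurable_const) (measure_ne_top μ _),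
      measure_univ, ENNReal.toReal_sub_of_le prob_le_one ENNReal.one_ne_top]
    simp only [ENNReal.toReal_one, smul_eq_mul]
    ring
  have key : Tendsto (fun u' => ∫ ω, (max (Y ω - u') 0 - max (Y ω - u) 0) / (u' - u) ∂μ)
      (𝓝[<] u) (𝓝 (∫ ω, g ω ∂μ)) := by
    apply tendsto_integral_filter_of_dominated_convergence (fun _ => (1 : ℝ))
    · filter_upwards with u'
      exact (((hYmeas'.sub measurable_const).max measurable_const).sub
        ((hYmeas'.sub measurable_const).max measurable_const)).div_const _ |>.aestronglyMeasurable
    · filter_upwards [self_mem_nhdsWithin] with u' (hu' : u' < u)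
      filter_upwards with ω
      have hne : u' - u ≠ 0 := sub_ne_zero.mpr hu'.ne
      rw [norm_div, div_le_one (norm_pos_iff.mpr hne)]
      calc ‖max (Y ω - u') 0 - max (Y ω - u) 0‖
          ≤ |(Y ω - u') - (Y ω - u)| := abs_max_sub_max_le_abs _ _ _
        _ = ‖u' - u‖ := by rw [show (Y ω - u') - (Y ω - u) = -(u' - u) by ring, abs_neg]; rfl
    · exact integrable_const 1
    · filter_upwards with ω
      by_cases h : u ≤ Y ω
      · have hgω : g ω = -1 := by simp [hg, Set.indicator_of_mem, h]
        rw [hgω]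
        apply Tendsto.congr' _ tendsto_const_nhds
        filter_upwards [self_mem_nhdsWithin] with u' (hu' : u' < u)
        have h1 : max (Y ω - u') 0 = Y ω - u' := max_eq_left (by linarith)
        have h2 : max (Y ω - u) 0 = Y ω - u := max_eq_left (by linarith)
        rw [h1, h2]
        field_simp [sub_ne_zero.mpr hu'.ne]
        ring
      · push_neg at h
        have hgω : g ω = 0 := by simp [hg, Set.indicator_of_notMem, not_le.mpr h]
        rw [hgω]
        apply Tendsto.congr' _ tendsto_const_nhds
        filter_upwards [nhdsWithin_le_nhds (eventually_gt_nhds h)] with u' (hu' : Y ω < u')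
        have h1 : max (Y ω - u') 0 = 0 := max_eq_right (by linarith)
        have h2 : max (Y ω - u) 0 = 0 := max_eq_right (by linarith)
        rw [h1, h2]
        simp
  rw [← hgint]
  apply key.congr
  intro u'
  have hi : ∀ v : ℝ, Integrable (fun ω => max (Y ω - v) 0) μ := fun v =>
    (hYint.sub (integrable_const v)).pos_part
  rw [integral_div, integral_sub (hi u') (hi u)]
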